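/- arXiv:quant-ph/0105079 — 4 statements merged into one kernel-verified Lean document; each statement's English description precedes it below -/
import Mathlib

section
/- Let $(c_{n,m})_{n,m\in\mathbb{Z}}$ with $c_{n,m} = \langle h_n, h_m\rangle$ for a sequence of unit vectors $(h_n)$ in a Hilbert space, and let $E$ be the associated covariant localization observable with matrix elements $\langle e_n, E(X)e_m\rangle = c_{n,m}\int_X z^{m-n} d\mu(z)$. Then $E(X)E(Y) = E(Y)E(X)$ for all Borel sets $X, Y \subseteq \mathbb{T}$ if and only if $c_{n,n+k}\, c_{n+k,m} = c_{n,m-k}\, c_{m-k,m}$ for all $n, m, k \in \mathbb{Z}$. -/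
open MeasureTheory Complex

/-- The circle integral `∫_X z^k dμ(z)` in the parametrization `z = e^{iθ}`, `θ ∈ [0, 2π)`. -/
noncomputable def circInt (k : ℤ) (X : Set ℝ) : ℂ :=
  (2 * Real.pi : ℂ)⁻¹ * ∫ θ in X, Complex.exp (Complex.I * (k : ℂ) * (θ : ℂ))

lemma integral_exp_Ico (k : ℤ) (a b : ℝ) (hab : a ≤ b) :
    ∫ θ in Set.Ico a b, Complex.exp (Complex.I * (k : ℂ) * (θ : ℂ)) =
      if k = 0 then ((b : ℂ) - a) else
        (Complex.exp (Complex.I * k * b) - Complex.exp (Complex.I * k * a)) / (Complex.I * k) := by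
  split_ifs with hk
  · subst hk
    simp only [Int.cast_zero, mul_zero, zero_mul, Complex.exp_zero]
    rw [MeasureTheory.setIntegral_const]
    simp [Real.volume_Ico, ENNReal.toReal_ofReal (sub_nonneg.2 hab), max_eq_left (sub_nonneg.2 hab)]
  · have hc : (Complex.I * k) ≠ 0 := by
      simp [Complex.I_ne_zero, Int.cast_eq_zero, hk]
    rw [MeasureTheory.integral_Ico_eq_integral_Ioo, ← MeasureTheory.integral_Ioc_eq_integral_Ioo,
      ← intervalIntegral.integral_of_le hab]
    simpa using integral_exp_mul_complex (a := a) (b := b) hc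

/-- Fourier coefficients of the indicator of `[0,1)`. -/
noncomputable def wcoef (k : ℤ) : ℂ :=
  if k = 0 then (2 * Real.pi : ℂ)⁻¹ else
    (2 * Real.pi : ℂ)⁻¹ * ((Complex.exp (Complex.I * k) - 1) / (Complex.I * k))

lemma circInt_Ico01 (k : ℤ) : circInt k (Set.Ico 0 1) = wcoef k := by
  rw [circInt, integral_exp_Ico k 0 1 zero_le_one, wcoef]
  split_ifs with hk <;> simp

lemma exp_I_int_ne_one {k : ℤ} (hk : k ≠ 0) : Complex.exp (Complex.I * k) ≠ 1 := by
  intro hexp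
  obtain ⟨l, hl⟩ := Complex.exp_eq_one_iff.mp hexp
  have hl' : (k : ℂ) * Complex.I = (l : ℂ) * (2 * Real.pi) * Complex.I := by
    rw [mul_comm] at hl; rw [hl]; ring
  have h2 : (k : ℂ) = (l : ℂ) * (2 * Real.pi) := mul_right_cancel₀ Complex.I_ne_zero hl'
  have h3 : (k : ℝ) = (l : ℝ) * (2 * Real.pi) := by
    have := congrArg Complex.re h2
    simpa using this
  have hl0 : l ≠ 0 := by
    rintro rfl; simp at h3; exact hk (by exact_mod_cast h3)
  have : Real.pi = ((k : ℚ) / (2 * l) : ℚ) := by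
    push_cast
    field_simp at h3 ⊢
    linarith [h3]
  exact (irrational_pi) ⟨_, this.symm⟩

lemma wcoef_ne_zero (k : ℤ) : wcoef k ≠ 0 := by
  have h2pi : ((2 * Real.pi : ℂ))⁻¹ ≠ 0 := by
    simp [Real.pi_ne_zero]
  rw [wcoef]
  split_ifs with hk
  · exact h2pi
  · have hc : (Complex.I * k) ≠ 0 := by simp [Complex.I_ne_zero, hk]
    exact mul_ne_zero h2pi (div_ne_zero (sub_ne_zero.2 (exp_I_int_ne_one hk)) hc)

/-- The window `[α, α+1)` wrapped modulo `2π` into `[0, 2π)`. -/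
noncomputable def Xwin (α : ℝ) : Set ℝ :=
  if α + 1 ≤ 2 * Real.pi then Set.Ico α (α + 1)
  else Set.Ico α (2 * Real.pi) ∪ Set.Ico 0 (α + 1 - 2 * Real.pi)

lemma Xwin_subset {α : ℝ} (h0 : 0 ≤ α) (h2 : α < 2 * Real.pi) :
    Xwin α ⊆ Set.Ico 0 (2 * Real.pi) := by
  rw [Xwin]; split_ifs with hca
  · intro x hx
    exact ⟨le_trans h0 hx.1, lt_of_lt_of_le hx.2 hca⟩
  · push_neg at hca
    intro x hx
    rcases hx with hx | hx
    · exact ⟨le_trans h0 hx.1, hx.2⟩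
    · exact ⟨hx.1, lt_of_lt_of_le hx.2 (by nlinarith [Real.pi_gt_three])⟩

lemma Xwin_measurable (α : ℝ) : MeasurableSet (Xwin α) := by
  rw [Xwin]; split_ifs
  · exact measurableSet_Ico
  · exact (measurableSet_Ico).union measurableSet_Ico

lemma exp_I_int_mul_two_pi (k : ℤ) : Complex.exp (Complex.I * k * (2 * Real.pi)) = 1 := by
  have := Complex.exp_int_mul_two_pi_mul_I k
  rw [← this]; ring_nf

lemma circInt_Xwin (k : ℤ) {α : ℝ} (h0 : 0 ≤ α) (h2 : α < 2 * Real.pi) :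
    circInt k (Xwin α) = Complex.exp (Complex.I * k * α) * wcoef k := by
  rw [circInt, Xwin]
  split_ifs with hca
  · rw [integral_exp_Ico k α (α + 1) (by linarith)]
    rw [wcoef]
    split_ifs with hk
    · subst hk; simp
    · have hc : (Complex.I * k) ≠ 0 := by simp [Complex.I_ne_zero, hk]
      have : Complex.exp (Complex.I * k * (α + 1)) =
          Complex.exp (Complex.I * k * α) * Complex.exp (Complex.I * k) := by
        rw [← Complex.exp_add]; ring_nf
      push_cast
      rw [this]
      field_simp
  · push_neg at hca
    have hd : Disjoint (Set.Ico α (2 * Real.pi)) (Set.Ico 0 (α + 1 - 2 * Real.pi)) := by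
      rw [Set.disjoint_left]
      rintro x ⟨hx1, _⟩ ⟨_, hx4⟩
      nlinarith [Real.pi_gt_three]
    have hint : ∀ a b : ℝ, IntegrableOn (fun θ : ℝ => Complex.exp (Complex.I * k * θ))
        (Set.Ico a b) := by
      intro a b
      have hcont : Continuous (fun θ : ℝ => Complex.exp (Complex.I * k * θ)) := by
        continuity
      exact (hcont.integrableOn_Icc).mono_set Set.Ico_subset_Icc_self
    rw [MeasureTheory.setIntegral_union hd measurableSet_Ico (hint _ _) (hint _ _)]
    rw [integral_exp_Ico k α (2 * Real.pi) (by linarith),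
        integral_exp_Ico k 0 (α + 1 - 2 * Real.pi) (by linarith)]
    rw [wcoef]
    split_ifs with hk
    · subst hk; push_cast; simp
    · have hc : (Complex.I * k) ≠ 0 := by simp [Complex.I_ne_zero, hk]
      have e1 : Complex.exp (Complex.I * k * (2 * Real.pi)) = 1 := exp_I_int_mul_two_pi k
      have e1' : Complex.exp (((-k : ℤ) : ℂ) * (2 * Real.pi * Complex.I)) = 1 :=
        Complex.exp_int_mul_two_pi_mul_I (-k)
      have e2 : Complex.exp (Complex.I * k * ((α : ℂ) + 1 - 2 * Real.pi)) =
          Complex.exp (Complex.I * k * α) * Complex.exp (Complex.I * k) := by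
        rw [show (Complex.I * k * ((α : ℂ) + 1 - 2 * Real.pi)) =
            (Complex.I * k * α + Complex.I * k) + ((-k : ℤ) : ℂ) * (2 * Real.pi * Complex.I) by
          push_cast; ring, Complex.exp_add, e1', mul_one, Complex.exp_add]
      push_cast
      rw [e1, e2]
      field_simp
      ring_nf; simp only [Complex.exp_zero]; ring

lemma norm_wcoef_sq_le {k : ℤ} (hk : k ≠ 0) : ‖wcoef k‖ ^ 2 ≤ 1 / (k : ℝ) ^ 2 := by
  have hpi : (0:ℝ) < Real.pi := Real.pi_pos
  have hknorm : ‖(Complex.I * (k:ℂ))‖ = |(k:ℝ)| := by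
    rw [norm_mul, Complex.norm_I, one_mul]
    exact_mod_cast Complex.norm_intCast k
  have hbound : ‖wcoef k‖ ≤ 1 / (Real.pi * |(k:ℝ)|) := by
    rw [wcoef, if_neg hk]
    rw [norm_mul, norm_div, hknorm]
    have h1 : ‖Complex.exp (Complex.I * k) - 1‖ ≤ 2 := by
      calc ‖Complex.exp (Complex.I * k) - 1‖ ≤ ‖Complex.exp (Complex.I * k)‖ + ‖(1:ℂ)‖ :=
        norm_sub_le _ _
      _ ≤ 2 := by
        have : ‖Complex.exp (Complex.I * k)‖ = 1 := by
          rw [Complex.norm_exp]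
          simp [Complex.mul_re]
        rw [this]; norm_num
    have h2 : ‖((2:ℂ) * Real.pi)⁻¹‖ = (2 * Real.pi)⁻¹ := by
      rw [norm_inv]
      congr 1
      rw [show ((2:ℂ) * Real.pi) = ((2 * Real.pi : ℝ) : ℂ) by push_cast; ring,
        Complex.norm_real]
      rw [Real.norm_eq_abs, abs_of_pos (by positivity)]
    rw [h2]
    have hkpos : (0:ℝ) < |(k:ℝ)| := by
      simp [abs_pos]; exact_mod_cast hk
    calc (2 * Real.pi)⁻¹ * (‖Complex.exp (Complex.I * ↑k) - 1‖ / |(k:ℝ)|)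
        ≤ (2 * Real.pi)⁻¹ * (2 / |(k:ℝ)|) := by
          apply mul_le_mul_of_nonneg_left _ (by positivity)
          exact div_le_div_of_nonneg_right h1 hkpos.le |>.trans_eq rfl
      _ = 1 / (Real.pi * |(k:ℝ)|) := by field_simp
  have hk1 : (1:ℝ) ≤ |(k:ℝ)| := by
    rw [show |(k:ℝ)| = ((|k| : ℤ) : ℝ) by push_cast; simp]
    exact_mod_cast Int.one_le_abs hk
  have : 1 / (Real.pi * |(k:ℝ)|) ≤ 1 / |(k:ℝ)| := by
    apply div_le_div_of_nonneg_left one_pos.le (by positivity)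
    nlinarith [Real.pi_gt_three]
  have hb2 : ‖wcoef k‖ ≤ 1 / |(k:ℝ)| := hbound.trans this
  calc ‖wcoef k‖ ^ 2 ≤ (1 / |(k:ℝ)|) ^ 2 := by
        apply pow_le_pow_left₀ (norm_nonneg _) hb2
    _ = 1 / (k:ℝ) ^ 2 := by rw [div_pow, one_pow, _root_.sq_abs]

lemma summable_wcoef_sq : Summable (fun k : ℤ => ‖wcoef k‖ ^ 2) := by
  apply Summable.of_norm_bounded_eventually (g := fun k : ℤ => 1 / (k:ℝ) ^ 2)
  · exact_mod_cast Real.summable_one_div_int_pow.mpr one_lt_two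
  · have : {k : ℤ | ¬ ‖(fun k : ℤ => ‖wcoef k‖ ^ 2) k‖ ≤ 1 / (k:ℝ) ^ 2} ⊆ {0} := by
      intro k hk
      simp only [Set.mem_setOf_eq, Real.norm_eq_abs,
        _root_.abs_of_nonneg (by positivity : (0:ℝ) ≤ ‖wcoef k‖^2)] at hk
      by_contra h0
      exact hk (norm_wcoef_sq_le h0)
    exact Filter.eventually_cofinite.mpr ((Set.finite_singleton 0).subset this)

section Hilbert

variable {H₂ : Type*} [NormedAddCommGroup H₂] [InnerProductSpace ℂ H₂]

lemma hasSum_matrix (e : HilbertBasis ℤ ℂ H₂) (A B : H₂ →L[ℂ] H₂) (n m : ℤ) :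
    HasSum (fun j => (inner ℂ (e n) (A (e j)) : ℂ) * (inner ℂ (e j) (B (e m)) : ℂ))
      (inner ℂ (e n) (A (B (e m))) : ℂ) := by
  have h1 := (e.hasSum_repr (B (e m))).mapL A
  have h2 := h1.mapL (innerSL ℂ (e n))
  convert h2 using 2 with j
  · rfl
  rw [innerSL_apply_apply, A.map_smul, inner_smul_right, e.repr_apply_apply, mul_comm]
  rw [innerSL_apply_apply]

lemma vector_ext (e : HilbertBasis ℤ ℂ H₂) {x y : H₂}
    (hxy : ∀ n : ℤ, (inner ℂ (e n) x : ℂ) = inner ℂ (e n) y) : x = y := by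
  apply e.repr.injective
  ext n
  rw [e.repr_apply_apply, e.repr_apply_apply]
  exact hxy n

lemma op_ext (e : HilbertBasis ℤ ℂ H₂) {A B : H₂ →L[ℂ] H₂}
    (hAB : ∀ m : ℤ, A (e m) = B (e m)) : A = B := by
  apply ContinuousLinearMap.ext_on
    (Submodule.dense_iff_topologicalClosure_eq_top.mpr e.dense_span)
  rintro x ⟨m, rfl⟩
  exact hAB m

end Hilbert

lemma extract_coef (t : ℤ → ℂ) (ht : Summable fun j => ‖t j‖) (j₀ : ℤ)
    (hzero : ∀ α ∈ Set.Ico (0:ℝ) (2 * Real.pi),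
      ∑' j : ℤ, t j * Complex.exp (Complex.I * ((j - j₀ : ℤ) : ℂ) * (α : ℂ)) = 0) :
    t j₀ = 0 := by
  have hpi : (0:ℝ) < 2 * Real.pi := by positivity
  set μ := volume.restrict (Set.Ico (0:ℝ) (2 * Real.pi)) with hμ
  set F : ℤ → ℝ → ℂ := fun j α => t j * Complex.exp (Complex.I * ((j - j₀ : ℤ) : ℂ) * (α : ℂ))
    with hF
  have hnorm : ∀ j α, ‖F j α‖ = ‖t j‖ := by
    intro j α
    rw [hF, norm_mul]
    have : ‖Complex.exp (Complex.I * ((j - j₀ : ℤ) : ℂ) * (α : ℂ))‖ = 1 := by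
      rw [Complex.norm_exp]
      have : (Complex.I * ((j - j₀ : ℤ) : ℂ) * (α : ℂ)).re = 0 := by
        simp [Complex.mul_re, Complex.mul_im]
      rw [this, Real.exp_zero]
    rw [this, mul_one]
  have hcont : ∀ j, Continuous (F j) := by
    intro j
    apply Continuous.mul continuous_const
    exact (Complex.continuous_exp.comp (by continuity))
  have hint : ∀ j, Integrable (F j) μ := by
    intro j
    rw [hμ]
    exact ((hcont j).integrableOn_Icc.mono_set Set.Ico_subset_Icc_self)
  have hIntNorm : ∀ j, ∫ α, ‖F j α‖ ∂μ = (2 * Real.pi) * ‖t j‖ := by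
    intro j
    simp only [hnorm]
    rw [hμ, MeasureTheory.setIntegral_const, MeasureTheory.measureReal_def, Real.volume_Ico, smul_eq_mul]
    rw [ENNReal.toReal_ofReal (by linarith)]
    ring_nf
  have hsum2 : Summable fun j => ∫ α, ‖F j α‖ ∂μ := by
    simp only [hIntNorm]
    exact ht.mul_left _
  have key := MeasureTheory.integral_tsum_of_summable_integral_norm hint hsum2
  have hrhs : ∫ α, ∑' j, F j α ∂μ = 0 := by
    rw [hμ]
    rw [MeasureTheory.setIntegral_congr_fun measurableSet_Ico
      (fun α hα => hzero α hα)]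
    simp
  have hlhs : ∀ j, ∫ α, F j α ∂μ = if j = j₀ then (2 * Real.pi : ℂ) * t j else 0 := by
    intro j
    rw [hμ, hF]
    simp only
    rw [MeasureTheory.integral_const_mul, integral_exp_Ico (j - j₀) 0 (2 * Real.pi) (by linarith)]
    split_ifs with h1 h2 h2
    · push_cast; ring
    · exact absurd (by omega : j = j₀) h2
    · exact absurd (by omega : j - j₀ = 0) h1
    · have he : Complex.exp (Complex.I * ((j - j₀ : ℤ) : ℂ) * ((2 * Real.pi : ℝ) : ℂ)) = 1 := by
        have := Complex.exp_int_mul_two_pi_mul_I (j - j₀)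
        rw [← this]; push_cast; ring_nf
      rw [he]
      simp
  rw [hrhs] at key
  have : ∑' j, (if j = j₀ then (2 * Real.pi : ℂ) * t j else 0) = 0 := by
    exact (tsum_congr hlhs).symm.trans key
  rw [tsum_eq_single j₀ (fun b hb => if_neg hb), if_pos rfl] at this
  have h2pi : (2 * Real.pi : ℂ) ≠ 0 := by
    simp [Real.pi_ne_zero]
  exact (mul_eq_zero.mp this).resolve_left h2pi

set_option maxHeartbeats 2000000 in
/-- A covariant localization observable `E` with matrix elements
`⟪eₙ, E(X) eₘ⟫ = c n m ∫_X z^{m-n} dμ(z)`, `c n m = ⟪hₙ, hₘ⟫`, is commutative iff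
`c_{n,n+k} c_{n+k,m} = c_{n,m-k} c_{m-k,m}` for all `n, m, k ∈ ℤ`. -/
theorem localization_commutative_iff
    {H : Type*} [NormedAddCommGroup H] [InnerProductSpace ℂ H]
    {H₂ : Type*} [NormedAddCommGroup H₂] [InnerProductSpace ℂ H₂]
    (e : HilbertBasis ℤ ℂ H₂)
    (h : ℤ → H) (hh : ∀ n, ‖h n‖ = 1)
    (c : ℤ → ℤ → ℂ) (hc : ∀ n m, c n m = (inner ℂ (h n) (h m) : ℂ))
    (E : Set ℝ → (H₂ →L[ℂ] H₂))
    (hE : ∀ (n m : ℤ) (X : Set ℝ), MeasurableSet X → X ⊆ Set.Ico 0 (2 * Real.pi) →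
      (inner ℂ (e n) (E X (e m)) : ℂ) = c n m * circInt (m - n) X) :
    (∀ X Y : Set ℝ, MeasurableSet X → X ⊆ Set.Ico 0 (2 * Real.pi) →
        MeasurableSet Y → Y ⊆ Set.Ico 0 (2 * Real.pi) → E X * E Y = E Y * E X) ↔
      (∀ n m k : ℤ, c n (n + k) * c (n + k) m = c n (m - k) * c (m - k) m) := by
  have hcb : ∀ n m : ℤ, ‖c n m‖ ≤ 1 := by
    intro n m
    rw [hc]
    calc ‖(inner ℂ (h n) (h m) : ℂ)‖ ≤ ‖h n‖ * ‖h m‖ := norm_inner_le_norm _ _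
      _ = 1 := by rw [hh, hh]; ring
  -- matrix elements of products
  have hprod : ∀ X Y : Set ℝ, MeasurableSet X → X ⊆ Set.Ico 0 (2 * Real.pi) →
      MeasurableSet Y → Y ⊆ Set.Ico 0 (2 * Real.pi) → ∀ n m : ℤ,
      HasSum (fun j : ℤ => (c n j * circInt (j - n) X) * (c j m * circInt (m - j) Y))
        (inner ℂ (e n) ((E X * E Y) (e m)) : ℂ) := by
    intro X Y hXm hXs hYm hYs n m
    have h0 := hasSum_matrix e (E X) (E Y) n m
    rw [show (E X) ((E Y) (e m)) = (E X * E Y) (e m) from rfl] at h0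
    have heq : (fun j : ℤ => ((inner ℂ (e n) ((E X) (e j)) : ℂ) * (inner ℂ (e j) ((E Y) (e m)) : ℂ)))
        = fun j : ℤ => (c n j * circInt (j - n) X) * (c j m * circInt (m - j) Y) := by
      funext j
      rw [hE n j X hXm hXs, hE j m Y hYm hYs]
    rw [heq] at h0
    exact h0
  constructor
  · -- forward direction
    intro hcomm n m k₀
    set j₀ : ℤ := n + k₀ with hj₀
    set b : ℤ → ℂ := fun j => c n j * c j m - c n (n + m - j) * c (n + m - j) m with hbdef
    set t : ℤ → ℂ := fun j => b j * (wcoef (j - n) * wcoef (m - j)) with htdef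
    -- summability
    have hbnorm : ∀ j, ‖b j‖ ≤ 2 := by
      intro j
      rw [hbdef]
      calc ‖c n j * c j m - c n (n + m - j) * c (n + m - j) m‖
          ≤ ‖c n j * c j m‖ + ‖c n (n + m - j) * c (n + m - j) m‖ := norm_sub_le _ _
        _ ≤ 1 * 1 + 1 * 1 := by
            rw [norm_mul, norm_mul]
            gcongr <;> [exact hcb n j; exact hcb j m; exact hcb n (n+m-j); exact hcb (n+m-j) m]
        _ = 2 := by norm_num
    have hw1 : Summable (fun j : ℤ => ‖wcoef (j - n)‖ ^ 2) := by
      have := (Equiv.subRight n).summable_iff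
        (f := fun k : ℤ => ‖wcoef k‖ ^ 2) |>.mpr summable_wcoef_sq
      exact this
    have hw2 : Summable (fun j : ℤ => ‖wcoef (m - j)‖ ^ 2) := by
      have := (Equiv.subLeft m).summable_iff
        (f := fun k : ℤ => ‖wcoef k‖ ^ 2) |>.mpr summable_wcoef_sq
      exact this
    have ht : Summable (fun j => ‖t j‖) := by
      apply Summable.of_nonneg_of_le (fun j => norm_nonneg _)
        (f := fun j : ℤ => 2 * (‖wcoef (j - n)‖ ^ 2 + ‖wcoef (m - j)‖ ^ 2))
      · intro j
        rw [htdef]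
        simp only
        rw [norm_mul, norm_mul]
        have h1 := hbnorm j
        have h2 : ‖wcoef (j - n)‖ * ‖wcoef (m - j)‖ ≤
            ‖wcoef (j - n)‖ ^ 2 + ‖wcoef (m - j)‖ ^ 2 := by
          nlinarith [sq_nonneg (‖wcoef (j - n)‖ - ‖wcoef (m - j)‖), norm_nonneg (wcoef (j - n)),
            norm_nonneg (wcoef (m - j))]
        have hn1 : (0:ℝ) ≤ ‖wcoef (j - n)‖ * ‖wcoef (m - j)‖ := by positivity
        nlinarith [norm_nonneg (b j)]
      · exact (hw1.add hw2).mul_left 2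
    -- the vanishing of the twisted sums
    have hY : Set.Ico (0:ℝ) 1 ⊆ Set.Ico 0 (2 * Real.pi) :=
      Set.Ico_subset_Ico le_rfl (by nlinarith [Real.pi_gt_three])
    have hzero : ∀ α ∈ Set.Ico (0:ℝ) (2 * Real.pi),
        ∑' j : ℤ, t j * Complex.exp (Complex.I * ((j - j₀ : ℤ) : ℂ) * (α : ℂ)) = 0 := by
      intro α hα
      have hXm := Xwin_measurable α
      have hXs := Xwin_subset hα.1 hα.2
      have h1 := hprod (Xwin α) (Set.Ico 0 1) hXm hXs measurableSet_Ico hY n m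
      have h2 := hprod (Set.Ico 0 1) (Xwin α) measurableSet_Ico hY hXm hXs n m
      rw [hcomm (Set.Ico 0 1) (Xwin α) measurableSet_Ico hY hXm hXs] at h2
      have h2' : HasSum
          ((fun j : ℤ => (c n j * circInt (j - n) (Set.Ico 0 1)) *
            (c j m * circInt (m - j) (Xwin α))) ∘ (Equiv.subLeft (n + m)))
          (inner ℂ (e n) ((E (Xwin α) * E (Set.Ico 0 1)) (e m)) : ℂ) :=
        ((Equiv.subLeft (n + m)).hasSum_iff).mpr h2
      have h3 := h1.sub h2'
      rw [sub_self] at h3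
      have h4 := h3.mul_right (Complex.exp (Complex.I * ((n - j₀ : ℤ) : ℂ) * (α : ℂ)))
      rw [zero_mul] at h4
      have hfun : (fun j : ℤ =>
          ((c n j * circInt (j - n) (Xwin α)) * (c j m * circInt (m - j) (Set.Ico 0 1)) -
            ((fun j : ℤ => (c n j * circInt (j - n) (Set.Ico 0 1)) *
              (c j m * circInt (m - j) (Xwin α))) ∘ (Equiv.subLeft (n + m))) j) *
            Complex.exp (Complex.I * ((n - j₀ : ℤ) : ℂ) * (α : ℂ)))
          = fun j : ℤ => t j * Complex.exp (Complex.I * ((j - j₀ : ℤ) : ℂ) * (α : ℂ)) := by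
        funext j
        simp only [Function.comp_apply, Equiv.subLeft_apply]
        have e1 : n + m - j - n = m - j := by ring
        have e2 : m - (n + m - j) = j - n := by ring
        rw [e1, e2, circInt_Xwin (j - n) hα.1 hα.2, circInt_Ico01 (m - j)]
        have hexp : Complex.exp (Complex.I * ((j - n : ℤ) : ℂ) * (α : ℂ)) *
            Complex.exp (Complex.I * ((n - j₀ : ℤ) : ℂ) * (α : ℂ)) =
            Complex.exp (Complex.I * ((j - j₀ : ℤ) : ℂ) * (α : ℂ)) := by
          rw [← Complex.exp_add]
          congr 1
          push_cast
          ring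
        rw [htdef, hbdef]
        simp only
        linear_combination (c n j * c j m - c n (n + m - j) * c (n + m - j) m) *
          wcoef (j - n) * wcoef (m - j) * hexp
      rw [hfun] at h4
      exact h4.tsum_eq
    have ht0 := extract_coef t ht j₀ hzero
    rw [htdef] at ht0
    simp only at ht0
    have hb0 : b j₀ = 0 := by
      rcases mul_eq_zero.mp ht0 with h | h
      · exact h
      · exact absurd h (mul_ne_zero (wcoef_ne_zero _) (wcoef_ne_zero _))
    rw [hbdef] at hb0
    simp only at hb0
    have := sub_eq_zero.mp hb0
    rw [hj₀] at this
    rw [show n + m - (n + k₀) = m - k₀ by ring] at this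
    exact this
  · -- backward direction
    intro hid X Y hXm hXs hYm hYs
    apply op_ext e
    intro m
    apply vector_ext e
    intro n
    have h1 := hprod X Y hXm hXs hYm hYs n m
    have h2 := hprod Y X hYm hYs hXm hXs n m
    have h2' : HasSum
        ((fun j : ℤ => (c n j * circInt (j - n) Y) * (c j m * circInt (m - j) X)) ∘
          (Equiv.subLeft (n + m)))
        (inner ℂ (e n) ((E Y * E X) (e m)) : ℂ) :=
      ((Equiv.subLeft (n + m)).hasSum_iff).mpr h2
    have hfun : (fun j : ℤ => (c n j * circInt (j - n) X) * (c j m * circInt (m - j) Y))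
        = (fun j : ℤ => (c n j * circInt (j - n) Y) * (c j m * circInt (m - j) X)) ∘
          (Equiv.subLeft (n + m)) := by
      funext j
      simp only [Function.comp_apply, Equiv.subLeft_apply]
      have e1 : n + m - j - n = m - j := by ring
      have e2 : m - (n + m - j) = j - n := by ring
      rw [e1, e2]
      have e3 : c n (n + m - j) * c (n + m - j) m = c n j * c j m := by
        have := hid n m (m - j)
        rw [show n + (m - j) = n + m - j by ring, show m - (m - j) = j by ring] at this
        exact this
      calc c n j * circInt (j - n) X * (c j m * circInt (m - j) Y)
          = (c n j * c j m) * (circInt (j - n) X * circInt (m - j) Y) := by ring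
        _ = (c n (n + m - j) * c (n + m - j) m) * (circInt (j - n) X * circInt (m - j) Y) := by
            rw [e3]
        _ = c n (n + m - j) * circInt (m - j) Y * (c (n + m - j) m * circInt (j - n) X) := by
            ring
    rw [hfun] at h1
    exact h1.unique h2'
end

section
/- Let $(b_{n,m})_{n,m\in J}$, $J\subseteq\mathbb{Z}$, be a positive semidefinite complex matrix. Then the double series $\sum_{n,m\in J,\; b_{n,n}\ne 0\ne b_{m,m}} \frac{b_{n,m}}{\sqrt{b_{n,n} b_{m,m}}\,(|n|+1)(|m|+1)} |\chi_{\{n\}}\rangle\langle\chi_{\{m\}}|$ converges in the weak operator topology on $\ell^2(J)$ to a bounded positive operator. -/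
open Complex
open scoped ComplexOrder Classical
open scoped ComplexConjugate ENNReal

namespace WGramAux

variable {I : Type*}

set_option maxHeartbeats 1000000 in
theorem kernel_op (a : I → ℝ) (ha0 : ∀ n, 0 ≤ a n) (hsa : Summable fun n => a n ^ 2)
    (c : I → I → ℂ) (hc : ∀ n m, ‖c n m‖ ≤ a n * a m) :
    ∃ S : lp (fun _ : I => ℂ) 2 →L[ℂ] lp (fun _ : I => ℂ) 2,
      ∀ u w : lp (fun _ : I => ℂ) 2,
        HasSum (fun nm : I × I => c nm.1 nm.2 * w nm.2 * conj (u nm.1))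
          (inner ℂ u (S w) : ℂ) := by
  have h2 : (0:ℝ) < (2:ℝ≥0∞).toReal := by norm_num
  have hrp : ∀ x : ℝ, x ^ (2:ℝ≥0∞).toReal = x ^ 2 := fun x => by
    rw [show (2:ℝ≥0∞).toReal = ((2:ℕ):ℝ) by norm_num, Real.rpow_natCast]
  have hA : Memℓp a 2 := memℓp_gen (by
    simpa only [hrp, Real.norm_eq_abs, _root_.sq_abs] using hsa)
  set A : lp (fun _ : I => ℝ) 2 := ⟨a, hA⟩ with hAdef
  -- ℓ¹ bound on weight·coefficient products
  have hsum1 : ∀ w : lp (fun _ : I => ℂ) 2,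
      Summable (fun m => a m * ‖w m‖) ∧ ∑' m, a m * ‖w m‖ ≤ ‖A‖ * ‖w‖ := by
    intro w
    have hWmem : Memℓp (fun n => ‖w n‖) 2 := memℓp_gen (by
      simpa only [norm_norm] using (lp.memℓp w).summable h2)
    set W : lp (fun _ : I => ℝ) 2 := ⟨fun n => ‖w n‖, hWmem⟩ with hWdef
    have hWnorm : ‖W‖ = ‖w‖ := by
      rw [lp.norm_eq_tsum_rpow h2, lp.norm_eq_tsum_rpow h2]
      congr 2
      funext i
      rw [show (W : ∀ _ : I, ℝ) i = ‖w i‖ from rfl, norm_norm]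
    have hWi : ∀ i, (W : ∀ _ : I, ℝ) i = ‖w i‖ := fun i => rfl
    have hAi : ∀ i, (A : ∀ _ : I, ℝ) i = a i := fun i => rfl
    have hs : Summable (fun m => a m * ‖w m‖) := by
      have := lp.summable_inner (𝕜 := ℝ) A W
      simpa [RCLike.inner_apply', hWi, hAi, mul_comm] using this
    refine ⟨hs, ?_⟩
    have hinner : (inner ℝ A W : ℝ) = ∑' m, a m * ‖w m‖ := by
      rw [lp.inner_eq_tsum]
      apply tsum_congr; intro i
      simp only [RCLike.inner_apply', conj_trivial]
      exact rfl
    calc ∑' m, a m * ‖w m‖ = (inner ℝ A W : ℝ) := hinner.symm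
      _ ≤ ‖A‖ * ‖W‖ := real_inner_le_norm A W
      _ = ‖A‖ * ‖w‖ := by rw [hWnorm]
  -- the pointwise kernel application
  set gfun : lp (fun _ : I => ℂ) 2 → ∀ _ : I, ℂ := fun w n => ∑' m, c n m * w m with hgdef
  have hgsum : ∀ (w : lp (fun _ : I => ℂ) 2) n, Summable (fun m => c n m * w m) := by
    intro w n
    refine Summable.of_norm_bounded (g := fun m => a n * (a m * ‖w m‖))
      (((hsum1 w).1).mul_left (a n)) (fun m => ?_)
    rw [norm_mul]
    calc ‖c n m‖ * ‖w m‖ ≤ (a n * a m) * ‖w m‖ :=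
          mul_le_mul_of_nonneg_right (hc n m) (norm_nonneg _)
      _ = a n * (a m * ‖w m‖) := by ring
  have hgnormsum : ∀ (w : lp (fun _ : I => ℂ) 2) n, Summable (fun m => ‖c n m * w m‖) := by
    intro w n
    refine Summable.of_nonneg_of_le (fun m => norm_nonneg _) (fun m => ?_)
      (((hsum1 w).1).mul_left (a n))
    rw [norm_mul]
    calc ‖c n m‖ * ‖w m‖ ≤ (a n * a m) * ‖w m‖ :=
          mul_le_mul_of_nonneg_right (hc n m) (norm_nonneg _)
      _ = a n * (a m * ‖w m‖) := by ring
  have hgle : ∀ (w : lp (fun _ : I => ℂ) 2) n,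
      ‖gfun w n‖ ≤ a n * ∑' m, a m * ‖w m‖ := by
    intro w n
    calc ‖gfun w n‖ ≤ ∑' m, ‖c n m * w m‖ := norm_tsum_le_tsum_norm (hgnormsum w n)
      _ ≤ ∑' m, a n * (a m * ‖w m‖) := by
          refine Summable.tsum_le_tsum (fun m => ?_) (hgnormsum w n) (((hsum1 w).1).mul_left (a n))
          rw [norm_mul]
          calc ‖c n m‖ * ‖w m‖ ≤ (a n * a m) * ‖w m‖ :=
                mul_le_mul_of_nonneg_right (hc n m) (norm_nonneg _)
            _ = a n * (a m * ‖w m‖) := by ring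
      _ = a n * ∑' m, a m * ‖w m‖ := tsum_mul_left
  have hCnn : ∀ w : lp (fun _ : I => ℂ) 2, 0 ≤ ∑' m, a m * ‖w m‖ := fun w =>
    tsum_nonneg (fun m => mul_nonneg (ha0 m) (norm_nonneg _))
  have hmem : ∀ w : lp (fun _ : I => ℂ) 2, Memℓp (gfun w) 2 := by
    intro w
    apply memℓp_gen
    simp only [hrp]
    refine Summable.of_nonneg_of_le (fun n => sq_nonneg _) (fun n => ?_)
      ((hsa.mul_left ((∑' m, a m * ‖w m‖) ^ 2)).congr (fun n => by ring) :
        Summable fun n => (a n * ∑' m, a m * ‖w m‖) ^ 2)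
    exact pow_le_pow_left₀ (norm_nonneg _) (hgle w n) 2
  set T : lp (fun _ : I => ℂ) 2 →ₗ[ℂ] lp (fun _ : I => ℂ) 2 :=
    { toFun := fun w => ⟨gfun w, hmem w⟩
      map_add' := fun w w' => by
        apply lp.ext
        funext n
        have h1 : ∀ m, c n m * (w + w') m = c n m * w m + c n m * w' m := fun m => by
          rw [lp.coeFn_add]; simp [mul_add]
        have : gfun (w + w') n = gfun w n + gfun w' n := by
          simp only [hgdef]
          rw [tsum_congr h1, Summable.tsum_add (hgsum w n) (hgsum w' n)]
        exact this
      map_smul' := fun z w => by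
        apply lp.ext
        funext n
        have h1 : ∀ m, c n m * (z • w) m = z * (c n m * w m) := fun m => by
          rw [lp.coeFn_smul]; simp [Pi.smul_apply, smul_eq_mul]; ring
        have : gfun (z • w) n = z * gfun w n := by
          simp only [hgdef]
          rw [tsum_congr h1, tsum_mul_left]
        simpa [lp.coeFn_smul, Pi.smul_apply, smul_eq_mul] using this } with hTdef
  have hTapp : ∀ (w : lp (fun _ : I => ℂ) 2) n, (T w : ∀ _ : I, ℂ) n = gfun w n :=
    fun w n => rfl
  have hbound : ∀ w : lp (fun _ : I => ℂ) 2, ‖T w‖ ≤ ‖A‖ ^ 2 * ‖w‖ := by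
    intro w
    set Cw := ∑' m, a m * ‖w m‖ with hCwdef
    have h1 : ‖T w‖ ≤ Cw * ‖A‖ := by
      apply lp.norm_le_of_forall_sum_le h2
        (mul_nonneg (hCnn w) (norm_nonneg _))
      intro s
      simp only [hrp]
      calc ∑ i ∈ s, ‖(T w : ∀ _ : I, ℂ) i‖ ^ 2
          ≤ ∑ i ∈ s, Cw ^ 2 * (a i ^ 2) := by
            refine Finset.sum_le_sum (fun i _ => ?_)
            rw [hTapp]
            calc ‖gfun w i‖ ^ 2 ≤ (a i * Cw) ^ 2 :=
                  pow_le_pow_left₀ (norm_nonneg _) (hgle w i) 2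
              _ = Cw ^ 2 * a i ^ 2 := by ring
        _ = Cw ^ 2 * ∑ i ∈ s, a i ^ 2 := by rw [Finset.mul_sum]
        _ ≤ Cw ^ 2 * ‖A‖ ^ 2 := by
            refine mul_le_mul_of_nonneg_left ?_ (sq_nonneg _)
            have := lp.sum_rpow_le_norm_rpow h2 A s
            simp only [hrp, Real.norm_eq_abs, _root_.sq_abs] at this
            exact this
        _ = (Cw * ‖A‖) ^ 2 := by ring
    calc ‖T w‖ ≤ Cw * ‖A‖ := h1
      _ ≤ (‖A‖ * ‖w‖) * ‖A‖ :=
          mul_le_mul_of_nonneg_right ((hsum1 w).2) (norm_nonneg _)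
      _ = ‖A‖ ^ 2 * ‖w‖ := by ring
  refine ⟨T.mkContinuous (‖A‖ ^ 2) hbound, ?_⟩
  intro u w
  have hSapp : ∀ n, ((T.mkContinuous (‖A‖ ^ 2) hbound) w : ∀ _ : I, ℂ) n = gfun w n :=
    fun n => rfl
  set F : I × I → ℂ := fun nm => c nm.1 nm.2 * w nm.2 * conj (u nm.1) with hFdef
  have hFsum : Summable F := by
    refine Summable.of_norm_bounded
      (g := fun nm : I × I => (a nm.1 * ‖u nm.1‖) * (a nm.2 * ‖w nm.2‖))
      (Summable.mul_of_nonneg (hsum1 u).1 (hsum1 w).1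
        (fun n => mul_nonneg (ha0 n) (norm_nonneg _))
        (fun n => mul_nonneg (ha0 n) (norm_nonneg _))) (fun nm => ?_)
    simp only [hFdef, norm_mul, RCLike.norm_conj]
    calc ‖c nm.1 nm.2‖ * ‖w nm.2‖ * ‖u nm.1‖
        ≤ (a nm.1 * a nm.2) * ‖w nm.2‖ * ‖u nm.1‖ := by
          refine mul_le_mul_of_nonneg_right
            (mul_le_mul_of_nonneg_right (hc nm.1 nm.2) (norm_nonneg _)) (norm_nonneg _)
      _ = (a nm.1 * ‖u nm.1‖) * (a nm.2 * ‖w nm.2‖) := by ring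
  have htsum : ∑' nm, F nm = (inner ℂ u ((T.mkContinuous (‖A‖ ^ 2) hbound) w) : ℂ) := by
    rw [Summable.tsum_prod hFsum]
    rw [lp.inner_eq_tsum]
    apply tsum_congr; intro n
    have h1 : ∀ m, F (n, m) = (c n m * w m) * conj (u n) := fun m => rfl
    rw [tsum_congr h1, tsum_mul_right]
    have h2 : (inner ℂ (u n) (((T.mkContinuous (‖A‖ ^ 2) hbound) w : ∀ _ : I, ℂ) n) : ℂ)
        = conj (u n) * gfun w n := by
      rw [hSapp]; simp [RCLike.inner_apply', mul_comm]
    rw [h2]; ring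
  exact htsum ▸ hFsum.hasSum

end WGramAux

section Facts
variable (J : Set ℤ) (b : J → J → ℂ)
  (hb : ∀ d : J →₀ ℂ,
      0 ≤ ∑ n ∈ d.support, ∑ m ∈ d.support, starRingEnd ℂ (d n) * b n m * d m)
include hb

theorem wg_quad (s : Finset J) (e : J → ℂ) :
    0 ≤ ∑ n ∈ s, ∑ m ∈ s, conj (e n) * b n m * e m := by
  classical
  set f : J → ℂ := fun n => if n ∈ s then e n else 0 with hfdef
  have hf : ∀ n, f n ≠ 0 → n ∈ s := fun n h => by
    by_contra hn; simp [hfdef, hn] at h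
  set d : J →₀ ℂ := Finsupp.onFinset s f hf with hddef
  have hds : d.support ⊆ s := Finsupp.support_onFinset_subset
  have hd0 : ∀ n, n ∉ d.support → d n = 0 := fun n h => Finsupp.notMem_support_iff.1 h
  have hde : ∀ n ∈ s, d n = e n := fun n hn => by
    simp [hddef, hfdef, Finsupp.onFinset_apply, hn]
  have key := hb d
  have h1 : ∀ n, ∑ m ∈ d.support, conj (d n) * b n m * d m
      = ∑ m ∈ s, conj (d n) * b n m * d m := fun n =>
    Finset.sum_subset hds (fun m _ hm => by rw [hd0 m hm]; ring)
  have h2 : ∑ n ∈ d.support, ∑ m ∈ s, conj (d n) * b n m * d m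
      = ∑ n ∈ s, ∑ m ∈ s, conj (d n) * b n m * d m :=
    Finset.sum_subset hds (fun n _ hn => by
      rw [hd0 n hn]
      simp)
  calc (0:ℂ) ≤ ∑ n ∈ d.support, ∑ m ∈ d.support, conj (d n) * b n m * d m := key
    _ = ∑ n ∈ s, ∑ m ∈ s, conj (d n) * b n m * d m := by
        rw [Finset.sum_congr rfl (fun n _ => h1 n), h2]
    _ = ∑ n ∈ s, ∑ m ∈ s, conj (e n) * b n m * e m := by
        refine Finset.sum_congr rfl (fun n hn => Finset.sum_congr rfl (fun m hm => ?_))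
        rw [hde n hn, hde m hm]

theorem wg_diag (n : J) : 0 ≤ b n n := by
  have := wg_quad J b hb {n} (fun _ => 1)
  simpa using this

theorem wg_Q2 (n m : J) (hnm : n ≠ m) (α β : ℂ) :
    0 ≤ conj α * b n n * α + conj α * b n m * β + conj β * b m n * α
        + conj β * b m m * β := by
  classical
  have h := wg_quad J b hb {n, m} (fun k => if k = n then α else β)
  rw [Finset.sum_pair hnm] at h
  rw [Finset.sum_pair hnm, Finset.sum_pair hnm] at h
  simp only [if_pos rfl, if_neg (Ne.symm hnm), eq_self_iff_true, if_true] at h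
  exact h.trans_eq (by ring)

theorem wg_real (n : J) : b n n = ((b n n).re : ℂ) := by
  have h := wg_diag J b hb n
  rw [Complex.le_def] at h
  exact (Complex.ext (by simp) (by simp [← h.2])).symm

theorem wg_herm (n m : J) : b m n = conj (b n m) := by
  classical
  by_cases hnm : n = m
  · subst hnm
    rw [wg_real J b hb n]
    simp [Complex.conj_ofReal]
  · have h1 := wg_Q2 J b hb n m hnm 1 1
    have h2 := wg_Q2 J b hb n m hnm 1 I
    rw [Complex.le_def] at h1 h2
    have e1 := h1.2
    have e2 := h2.2
    have hn0 : (b n n).im = 0 := by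
      have := wg_diag J b hb n; rw [Complex.le_def] at this; exact this.2.symm
    have hm0 : (b m m).im = 0 := by
      have := wg_diag J b hb m; rw [Complex.le_def] at this; exact this.2.symm
    simp only [map_one, one_mul, mul_one, Complex.add_im, Complex.mul_im, Complex.mul_re,
      Complex.I_re, Complex.I_im, Complex.zero_im, Complex.conj_re, Complex.conj_im,
      Complex.one_re, Complex.one_im] at e1 e2
    apply Complex.ext
    · simp only [Complex.conj_re]; nlinarith [e1, e2, hn0, hm0]
    · simp only [Complex.conj_im]; nlinarith [e1, e2, hn0, hm0]

theorem wg_cs (n m : J) : ‖b n m‖ ^ 2 ≤ (b n n).re * (b m m).re := by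
  classical
  by_cases hnm : n = m
  · subst hnm
    rw [wg_real J b hb n]
    simp only [Complex.norm_real, Complex.ofReal_re, Real.norm_eq_abs, _root_.sq_abs]
    nlinarith
  · set z := b n m with hz
    have hzz : z * conj z = ((‖z‖ : ℝ) : ℂ) ^ 2 := by
      rw [Complex.mul_conj]
      norm_cast
      rw [Complex.sq_norm]
    have hkey : ∀ t : ℝ, 0 ≤ (b n n).re - 2 * t * ‖z‖ ^ 2 + t ^ 2 * ‖z‖ ^ 2 * (b m m).re := by
      intro t
      have h := wg_Q2 J b hb n m hnm 1 (-(t:ℂ) * conj z)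
      rw [wg_herm J b hb n m, wg_real J b hb n, wg_real J b hb m] at h
      have hexpr : conj (1:ℂ) * ((b n n).re : ℂ) * 1 + conj (1:ℂ) * z * (-(t:ℂ) * conj z)
          + conj (-(t:ℂ) * conj z) * conj z * 1
          + conj (-(t:ℂ) * conj z) * ((b m m).re : ℂ) * (-(t:ℂ) * conj z)
          = (((b n n).re - 2 * t * ‖z‖ ^ 2 + t ^ 2 * ‖z‖ ^ 2 * (b m m).re : ℝ) : ℂ) := by
        simp only [map_one, map_mul, map_neg, Complex.conj_conj, Complex.conj_ofReal]
        push_cast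
        linear_combination (t ^ 2 * ((b m m).re : ℂ) - 2 * (t : ℂ)) * hzz
      rw [hexpr] at h
      exact_mod_cast Complex.zero_le_real.1 h
    have hrn : 0 ≤ (b n n).re := by
      have := wg_diag J b hb n; rw [Complex.le_def] at this; simpa using this.1
    have hrm : 0 ≤ (b m m).re := by
      have := wg_diag J b hb m; rw [Complex.le_def] at this; simpa using this.1
    have hgoal : ‖z‖ ^ 2 ≤ (b n n).re * (b m m).re := by
      set Z := ‖z‖ ^ 2 with hZdef
      have hZnn : 0 ≤ Z := hZdef ▸ sq_nonneg _
      by_cases hm : (b m m).re = 0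
      · have hz0 : Z = 0 := by
          by_contra h0
          have hpos : 0 < Z := lt_of_le_of_ne hZnn (Ne.symm h0)
          have hk := hkey (((b n n).re + 1) / (2 * Z))
          rw [hm] at hk
          have h2 : 2 * (((b n n).re + 1) / (2 * Z)) * Z = (b n n).re + 1 := by
            field_simp
          nlinarith [hk]
        rw [hz0, hm]; nlinarith
      · have hmpos : 0 < (b m m).re := lt_of_le_of_ne hrm (Ne.symm hm)
        have hk := hkey (1 / (b m m).re)
        have e : (b n n).re - 2 * (1 / (b m m).re) * Z + (1 / (b m m).re) ^ 2 * Z * (b m m).re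
            = (b n n).re - Z / (b m m).re := by
          field_simp
          ring
        rw [e] at hk
        have h3 : Z / (b m m).re ≤ (b n n).re := by linarith
        calc Z = Z / (b m m).re * (b m m).re := by field_simp
          _ ≤ (b n n).re * (b m m).re := mul_le_mul_of_nonneg_right h3 hrm
    exact hgoal

end Facts

theorem wg_weight_summable (J : Set ℤ) :
    Summable (fun n : J => ((((|(n : ℤ)| + 1 : ℤ) : ℝ))⁻¹) ^ 2) := by
  have base : Summable (fun n : ℕ => (((n : ℝ) + 1)⁻¹) ^ 2) := by
    have h := Real.summable_one_div_nat_pow.2 (by norm_num : 1 < 2)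
    have h2 := (summable_nat_add_iff 1).2 h
    refine h2.congr (fun n => ?_)
    push_cast
    rw [one_div, inv_pow]
  have hZ : Summable (fun k : ℤ => ((((|k| + 1 : ℤ) : ℝ))⁻¹) ^ 2) := by
    apply Summable.of_nat_of_neg
    · refine base.congr (fun n => ?_)
      congr 2
      push_cast [Int.abs_natCast]
      ring
    · refine base.congr (fun n => ?_)
      congr 2
      push_cast [abs_neg, Int.abs_natCast]
      ring
  exact hZ.subtype J

set_option maxHeartbeats 1000000 in
/-- For a positive semidefinite matrix `(b n m)_{n,m ∈ J}`, the double series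
`∑_{n,m : bₙₙ ≠ 0 ≠ bₘₘ} bₙₘ / (√(bₙₙ bₘₘ) (|n|+1)(|m|+1)) |χₙ⟩⟨χₘ|` converges in the
weak operator topology on `ℓ²(J)` to a bounded positive operator. -/
theorem weighted_gram_series_converges_weakly (J : Set ℤ) (b : J → J → ℂ)
    (hb : ∀ d : J →₀ ℂ,
      0 ≤ ∑ n ∈ d.support, ∑ m ∈ d.support, starRingEnd ℂ (d n) * b n m * d m) :
    ∃ S : lp (fun _ : J => ℂ) 2 →L[ℂ] lp (fun _ : J => ℂ) 2,
      (∀ w, 0 ≤ (inner ℂ w (S w) : ℂ)) ∧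
      ∀ u w, HasSum
        (fun nm : J × J =>
          (if b nm.1 nm.1 ≠ 0 ∧ b nm.2 nm.2 ≠ 0 then
              b nm.1 nm.2 /
                ((Real.sqrt ((b nm.1 nm.1).re * (b nm.2 nm.2).re) : ℂ) *
                  ((|(nm.1 : ℤ)| + 1 : ℤ) : ℂ) * ((|(nm.2 : ℤ)| + 1 : ℤ) : ℂ))
            else 0) *
            (inner ℂ u ((inner ℂ (lp.single 2 nm.2 (1 : ℂ)) w : ℂ) •
              lp.single 2 nm.1 (1 : ℂ)) : ℂ))
        (inner ℂ u (S w) : ℂ) := by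
  classical
  set a : J → ℝ := fun n => (((|(n : ℤ)| + 1 : ℤ) : ℝ))⁻¹ with hadef
  have haposN : ∀ n : J, (0 : ℝ) < (((|(n : ℤ)| + 1 : ℤ) : ℝ)) := fun n => by
    have h1 : (0:ℤ) < |(n:ℤ)| + 1 := by positivity
    exact_mod_cast h1
  have ha0 : ∀ n, 0 ≤ a n := fun n => inv_nonneg.2 (haposN n).le
  have hsa : Summable (fun n => a n ^ 2) := wg_weight_summable J
  set c : J → J → ℂ := fun n m =>
    if b n n ≠ 0 ∧ b m m ≠ 0 then
      b n m / ((Real.sqrt ((b n n).re * (b m m).re) : ℂ)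
        * ((|(n : ℤ)| + 1 : ℤ) : ℂ) * ((|(m : ℤ)| + 1 : ℤ) : ℂ))
    else 0 with hcdef
  have hrenn : ∀ n : J, 0 ≤ (b n n).re := by
    intro n
    have := wg_diag J b hb n; rw [Complex.le_def] at this; simpa using this.1
  have hrepos : ∀ n : J, b n n ≠ 0 → 0 < (b n n).re := by
    intro n hn
    rcases lt_or_eq_of_le (hrenn n) with h | h
    · exact h
    · exact absurd (by rw [wg_real J b hb n, ← h]; simp) hn
  have hNcast : ∀ n : J, ((|(n : ℤ)| + 1 : ℤ) : ℂ) = ((((|(n : ℤ)| + 1 : ℤ) : ℝ)) : ℂ) := by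
    intro n; norm_cast
  have hc : ∀ n m, ‖c n m‖ ≤ a n * a m := by
    intro n m
    simp only [hcdef]
    by_cases h : b n n ≠ 0 ∧ b m m ≠ 0
    · rw [if_pos h]
      have hrn := hrepos n h.1
      have hrm := hrepos m h.2
      have hs : ‖b n m‖ ≤ Real.sqrt ((b n n).re * (b m m).re) := by
        rw [show ‖b n m‖ = Real.sqrt (‖b n m‖ ^ 2) by
          rw [Real.sqrt_sq (norm_nonneg _)]]
        exact Real.sqrt_le_sqrt (wg_cs J b hb n m)
      have hqpos : 0 < Real.sqrt ((b n n).re * (b m m).re) :=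
        Real.sqrt_pos.2 (mul_pos hrn hrm)
      rw [norm_div, norm_mul, norm_mul, hNcast n, hNcast m, Complex.norm_real,
        Complex.norm_real, Complex.norm_real, Real.norm_eq_abs, Real.norm_eq_abs,
        Real.norm_eq_abs, _root_.abs_of_nonneg hqpos.le, _root_.abs_of_nonneg (haposN n).le,
        _root_.abs_of_nonneg (haposN m).le]
      rw [div_le_iff₀ (by positivity)]
      have heq : a n * a m * (Real.sqrt ((b n n).re * (b m m).re)
          * (((|(n : ℤ)| + 1 : ℤ) : ℝ)) * (((|(m : ℤ)| + 1 : ℤ) : ℝ)))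
          = Real.sqrt ((b n n).re * (b m m).re) := by
        simp only [hadef]
        field_simp
      rw [heq]
      exact hs
    · rw [if_neg h]
      simpa using mul_nonneg (ha0 n) (ha0 m)
  obtain ⟨S, hS⟩ := WGramAux.kernel_op a ha0 hsa c hc
  refine ⟨S, ?_, ?_⟩
  · -- positivity
    intro w
    have hsum := hS w w
    have hmono : Monotone (fun s : Finset J => s ×ˢ s) := fun s t hst =>
      Finset.product_subset_product hst hst
    have hcof : Filter.Tendsto (fun s : Finset J => s ×ˢ s) Filter.atTop Filter.atTop :=
      Filter.tendsto_atTop_finset_of_monotone hmono (fun p => ⟨{p.1, p.2}, by simp⟩)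
    have hsum' : Filter.Tendsto
        (fun s : Finset (J × J) => ∑ p ∈ s, c p.1 p.2 * w p.2 * conj (w p.1))
        Filter.atTop (nhds (inner ℂ w (S w) : ℂ)) := hsum
    have htend := hsum'.comp hcof
    set e : J → ℂ := fun n => if b n n ≠ 0 then
      w n * (((Real.sqrt ((b n n).re) : ℝ) : ℂ) * ((|(n : ℤ)| + 1 : ℤ) : ℂ))⁻¹
      else 0 with hedef
    have heq : ∀ n m : J, c n m * w m * conj (w n) = conj (e n) * b n m * e m := by
      intro n m
      by_cases hn : b n n ≠ 0
      · by_cases hm : b m m ≠ 0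
        · simp only [hcdef, hedef, if_pos hn, if_pos hm, if_pos (And.intro hn hm)]
          rw [map_mul, map_inv₀, map_mul, Complex.conj_ofReal, map_intCast,
            Real.sqrt_mul (hrenn n), Complex.ofReal_mul]
          ring
        · simp only [hcdef, hedef, if_neg hm, if_neg (fun hc' : _ ∧ _ => hm hc'.2)]
          simp
      · simp only [hcdef, hedef, if_neg hn, if_neg (fun hc' : _ ∧ _ => hn hc'.1)]
        simp
    have hnn : ∀ s : Finset J,
        0 ≤ ∑ p ∈ s ×ˢ s, c p.1 p.2 * w p.2 * conj (w p.1) := by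
      intro s
      rw [Finset.sum_product]
      calc (0:ℂ) ≤ ∑ n ∈ s, ∑ m ∈ s, conj (e n) * b n m * e m := wg_quad J b hb s e
        _ = ∑ n ∈ s, ∑ m ∈ s, c n m * w m * conj (w n) := by
            refine Finset.sum_congr rfl (fun n _ => Finset.sum_congr rfl (fun m _ => ?_))
            rw [heq n m]
    have hclosed : IsClosed {z : ℂ | 0 ≤ z} := by
      have hset : {z : ℂ | 0 ≤ z} = Complex.re ⁻¹' Set.Ici 0 ∩ Complex.im ⁻¹' {0} := by
        ext z
        simp only [Set.mem_setOf_eq, Complex.le_def, Set.mem_inter_iff, Set.mem_preimage,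
          Set.mem_Ici, Set.mem_singleton_iff]
        constructor
        · rintro ⟨h1, h2⟩
          exact ⟨by simpa using h1, by simpa using h2.symm⟩
        · rintro ⟨h1, h2⟩
          exact ⟨by simpa using h1, by simp [h2]⟩
      rw [hset]
      exact (isClosed_Ici.preimage Complex.continuous_re).inter
        (isClosed_singleton.preimage Complex.continuous_im)
    exact hclosed.mem_of_tendsto htend (Filter.Eventually.of_forall hnn)
  · intro u w
    have ht : (fun nm : J × J =>
          (if b nm.1 nm.1 ≠ 0 ∧ b nm.2 nm.2 ≠ 0 then
              b nm.1 nm.2 /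
                ((Real.sqrt ((b nm.1 nm.1).re * (b nm.2 nm.2).re) : ℂ) *
                  ((|(nm.1 : ℤ)| + 1 : ℤ) : ℂ) * ((|(nm.2 : ℤ)| + 1 : ℤ) : ℂ))
            else 0) *
            (inner ℂ u ((inner ℂ (lp.single 2 nm.2 (1 : ℂ)) w : ℂ) •
              lp.single 2 nm.1 (1 : ℂ)) : ℂ))
        = fun nm : J × J => c nm.1 nm.2 * w nm.2 * conj (u nm.1) := by
      funext nm
      rw [inner_smul_right, lp.inner_single_left, lp.inner_single_right]
      simp only [RCLike.inner_apply', map_one, one_mul, mul_one, hcdef]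
      ring
    rw [ht]
    exact hS u w
end

section
/- Let $E: \mathcal{B}([0,2\pi)) \to \mathcal{L}(H)$ be a covariant normalized positive operator measure with matrix elements $\langle n, E(X) m\rangle = c_{n,m}(2\pi)^{-1}\int_X e^{i(n-m)\theta}d\theta$. Then for every $k \in \mathbb{N}$, the finite matrix $(c_{n,m})_{-k\le n,m\le k}$ is positive semidefinite, i.e., $\sum_{n,m=-k}^k c_{n,m} |n\rangle\langle m| \ge 0$. -/
open MeasureTheory Complex Finset Filter Topology
open scoped ComplexOrder

/-- If a covariant normalized operator measure with matrix elements
`⟪n, E(X) m⟫ = c_{n,m} (2π)⁻¹ ∫_X e^{i(n-m)θ} dθ` is positive, then every finite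
truncation `(c_{n,m})_{-k ≤ n,m ≤ k}` is a positive semidefinite matrix. -/
theorem positive_operator_measure_coefficients_posSemidef
    {H : Type*} [NormedAddCommGroup H] [InnerProductSpace ℂ H] [CompleteSpace H]
    (e : HilbertBasis ℤ ℂ H)
    (E : Set ℝ → (H →L[ℂ] H)) (c : ℤ → ℤ → ℂ)
    (hnorm : E (Set.Ico 0 (2 * Real.pi)) = 1)
    (hE : ∀ (n m : ℤ) (X : Set ℝ), MeasurableSet X → X ⊆ Set.Ico 0 (2 * Real.pi) →
      (inner ℂ (e n) (E X (e m)) : ℂ) = c n m * (2 * Real.pi : ℂ)⁻¹ *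
        ∫ θ in X, Complex.exp (Complex.I * ((n : ℂ) - (m : ℂ)) * (θ : ℂ)))
    (hpos : ∀ X : Set ℝ, MeasurableSet X → X ⊆ Set.Ico 0 (2 * Real.pi) →
      ∀ u : H, 0 ≤ (inner ℂ u (E X u) : ℂ)) :
    ∀ (k : ℕ) (d : ℤ → ℂ),
      0 ≤ ∑ n ∈ Finset.Icc (-(k : ℤ)) k, ∑ m ∈ Finset.Icc (-(k : ℤ)) k,
        starRingEnd ℂ (d n) * c n m * d m := by
  intro k d
  have hπ : (0:ℝ) < 2 * Real.pi := by positivity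
  set S := Finset.Icc (-(k:ℤ)) k with hS
  set T : ℂ := ∑ n ∈ S, ∑ m ∈ S, starRingEnd ℂ (d n) * c n m * d m with hT
  set u : H := ∑ n ∈ S, d n • e n with hu
  -- expansion of the inner product
  have expand : ∀ X : Set ℝ, (inner ℂ u (E X u) : ℂ)
      = ∑ n ∈ S, ∑ m ∈ S,
          starRingEnd ℂ (d n) * d m * (inner ℂ (e n) (E X (e m)) : ℂ) := by
    intro X
    rw [hu, map_sum, sum_inner]
    refine Finset.sum_congr rfl fun n _ => ?_
    rw [inner_smul_left, inner_sum, Finset.mul_sum]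
    refine Finset.sum_congr rfl fun m _ => ?_
    rw [(E X).map_smul, inner_smul_right]
    ring
  -- each phase integral average tends to 1
  have key : ∀ n m : ℤ, Tendsto (fun ε : ℝ =>
      ε⁻¹ • ∫ θ in Set.Ico (0:ℝ) ε, Complex.exp (Complex.I * ((n:ℂ) - (m:ℂ)) * (θ:ℂ)))
      (𝓝[>] (0:ℝ)) (𝓝 1) := by
    intro n m
    set f : ℝ → ℂ := fun θ => Complex.exp (Complex.I * ((n:ℂ) - (m:ℂ)) * (θ:ℂ)) with hf
    have hcont : Continuous f := by
      exact Complex.continuous_exp.comp (continuous_const.mul Complex.continuous_ofReal)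
    have hderiv : HasDerivAt (fun x => ∫ t in (0:ℝ)..x, f t) (f 0) 0 :=
      intervalIntegral.integral_hasDerivAt_right (hcont.intervalIntegrable 0 0)
        (hcont.stronglyMeasurableAtFilter _ _) hcont.continuousAt
    have hf0 : f 0 = 1 := by simp [hf]
    have hslope := hasDerivAt_iff_tendsto_slope.mp hderiv
    rw [hf0] at hslope
    have hmono : 𝓝[>] (0:ℝ) ≤ 𝓝[≠] (0:ℝ) :=
      nhdsWithin_mono _ (fun x hx => ne_of_gt hx)
    have := hslope.mono_left hmono
    refine this.congr' ?_
    filter_upwards [self_mem_nhdsWithin] with ε (hε : 0 < ε)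
    have hIco : (∫ θ in Set.Ico (0:ℝ) ε, f θ) = ∫ t in (0:ℝ)..ε, f t := by
      rw [intervalIntegral.integral_of_le hε.le,
        MeasureTheory.integral_Ico_eq_integral_Ioo,
        MeasureTheory.integral_Ioc_eq_integral_Ioo]
    rw [slope_def_module, intervalIntegral.integral_same, ← hIco]
    simp
  -- the scaled inner products tend to (2π)⁻¹ * T
  have hQ : Tendsto (fun ε : ℝ => ε⁻¹ • (inner ℂ u (E (Set.Ico 0 ε) u) : ℂ))
      (𝓝[>] (0:ℝ)) (𝓝 (((2 * Real.pi : ℂ))⁻¹ * T)) := by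
    have hlim : Tendsto (fun ε : ℝ => ∑ n ∈ S, ∑ m ∈ S,
        starRingEnd ℂ (d n) * c n m * d m * (2 * Real.pi : ℂ)⁻¹ *
          (ε⁻¹ • ∫ θ in Set.Ico (0:ℝ) ε, Complex.exp (Complex.I * ((n:ℂ) - (m:ℂ)) * (θ:ℂ))))
        (𝓝[>] (0:ℝ)) (𝓝 (∑ n ∈ S, ∑ m ∈ S,
          starRingEnd ℂ (d n) * c n m * d m * (2 * Real.pi : ℂ)⁻¹ * 1)) := by
      refine tendsto_finset_sum _ fun n _ => tendsto_finset_sum _ fun m _ => ?_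
      exact (key n m).const_mul _
    have heq : (∑ n ∈ S, ∑ m ∈ S,
        starRingEnd ℂ (d n) * c n m * d m * (2 * Real.pi : ℂ)⁻¹ * 1)
        = ((2 * Real.pi : ℂ))⁻¹ * T := by
      rw [hT, Finset.mul_sum]
      refine Finset.sum_congr rfl fun n _ => ?_
      rw [Finset.mul_sum]
      refine Finset.sum_congr rfl fun m _ => ?_
      ring
    rw [heq] at hlim
    refine hlim.congr' ?_
    filter_upwards [Ioo_mem_nhdsGT_of_mem ⟨le_refl (0:ℝ), hπ⟩] with ε hε
    obtain ⟨hε0, hε2π⟩ := hε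
    have hsub : Set.Ico (0:ℝ) ε ⊆ Set.Ico 0 (2 * Real.pi) :=
      Set.Ico_subset_Ico_right hε2π.le
    rw [expand, Finset.smul_sum]
    refine Finset.sum_congr rfl fun n _ => ?_
    rw [Finset.smul_sum]
    refine Finset.sum_congr rfl fun m _ => ?_
    rw [hE n m _ measurableSet_Ico hsub, Complex.real_smul, Complex.real_smul]
    ring
  -- positivity of the approximants
  have hnn : ∀ᶠ ε in 𝓝[>] (0:ℝ), 0 ≤ ε⁻¹ • (inner ℂ u (E (Set.Ico 0 ε) u) : ℂ) := by
    filter_upwards [Ioo_mem_nhdsGT_of_mem ⟨le_refl (0:ℝ), hπ⟩] with ε hε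
    obtain ⟨hε0, hε2π⟩ := hε
    have h1 := hpos (Set.Ico 0 ε) measurableSet_Ico (Set.Ico_subset_Ico_right hε2π.le) u
    rw [Complex.real_smul]
    have h2 : (0:ℂ) ≤ ((ε⁻¹ : ℝ) : ℂ) := by
      rw [Complex.zero_le_real]; positivity
    exact mul_nonneg h2 h1
  -- pass to the limit
  have hne : (𝓝[>] (0:ℝ)).NeBot := nhdsGT_neBot 0
  have hL : (0:ℂ) ≤ ((2 * Real.pi : ℂ))⁻¹ * T := by
    rw [Complex.le_def]
    constructor
    · have hre : Tendsto (fun ε : ℝ => (ε⁻¹ • (inner ℂ u (E (Set.Ico 0 ε) u) : ℂ)).re)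
          (𝓝[>] (0:ℝ)) (𝓝 (((2 * Real.pi : ℂ))⁻¹ * T).re) :=
        (Complex.continuous_re.tendsto _).comp hQ
      simp only [Complex.zero_re]
      refine ge_of_tendsto hre ?_
      filter_upwards [hnn] with ε hε
      exact (Complex.le_def.mp hε).1
    · have him : Tendsto (fun ε : ℝ => (ε⁻¹ • (inner ℂ u (E (Set.Ico 0 ε) u) : ℂ)).im)
          (𝓝[>] (0:ℝ)) (𝓝 (((2 * Real.pi : ℂ))⁻¹ * T).im) :=
        (Complex.continuous_im.tendsto _).comp hQ
      have him0 : Tendsto (fun ε : ℝ => (ε⁻¹ • (inner ℂ u (E (Set.Ico 0 ε) u) : ℂ)).im)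
          (𝓝[>] (0:ℝ)) (𝓝 0) := by
        refine tendsto_const_nhds.congr' ?_
        filter_upwards [hnn] with ε hε
        exact ((Complex.le_def.mp hε).2).symm ▸ rfl
      simp only [Complex.zero_im]
      exact (tendsto_nhds_unique him0 him)
  have h2π : (0:ℂ) ≤ (2 * Real.pi : ℂ) := by
    have : ((2 * Real.pi : ℝ) : ℂ) = (2 * Real.pi : ℂ) := by push_cast; ring
    rw [← this, Complex.zero_le_real]; positivity
  have := mul_nonneg h2π hL
  have hne2 : (2 * Real.pi : ℂ) ≠ 0 := by
    have : ((2 * Real.pi : ℝ) : ℂ) ≠ 0 := by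
      simp [Complex.ofReal_ne_zero]
    push_cast at this ⊢; simpa using this
  rwa [← mul_assoc, mul_inv_cancel₀ hne2, one_mul] at this
end

section
/- Let $\widetilde{E}: \mathcal{B}(\mathbb{T}) \to \mathcal{L}(\mathcal{H})$ be a normalized positive operator measure of the form $\widetilde{E}(X) = \sum_{n,m\in\mathbb{N}} \langle\xi_n,\xi_m\rangle \int_X z^{m-n} d\mu(z)\, |n\rangle\langle m|$ for a sequence of unit vectors $(\xi_n)_{n\in\mathbb{N}}$ in $\mathcal{H}$, where $(|n\rangle)_{n\in\mathbb{N}}$ is an orthonormal basis. Then $\widetilde{E}$ is never projection valued: there exists a Borel set $X$ with $\widetilde{E}(X)^2 \ne \widetilde{E}(X)$. -/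
open MeasureTheory Complex
open scoped ComplexOrder

lemma circInt_conj (k : ℤ) (X : Set ℝ) :
    (starRingEnd ℂ) (circInt k X) = circInt (-k) X := by
  unfold circInt
  rw [map_mul, ← integral_conj]
  congr 1
  · rw [map_inv₀, map_mul, Complex.conj_ofReal]
    congr 1
    rw [show (2:ℂ) = ((2:ℝ):ℂ) by norm_num, Complex.conj_ofReal]
  · congr 1; funext θ
    rw [← Complex.exp_conj]
    congr 1
    simp only [map_mul, Complex.conj_ofReal, Complex.conj_I, map_intCast]
    push_cast
    ring

lemma circInt_zero : circInt 0 (Set.Ico 0 Real.pi) = 1 / 2 := by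
  unfold circInt
  have : ∀ θ : ℝ, Complex.exp (Complex.I * ((0:ℤ) : ℂ) * (θ : ℂ)) = 1 := by
    intro θ; simp
  simp only [this]
  rw [MeasureTheory.setIntegral_const]
  rw [Measure.real, Real.volume_Ico]
  simp only [sub_zero, smul_eq_mul, mul_one]
  rw [ENNReal.toReal_ofReal Real.pi_pos.le]
  have hπ : (Real.pi : ℂ) ≠ 0 := by exact_mod_cast Real.pi_ne_zero
  field_simp
  simp [Complex.real_smul]

lemma circInt_norm_le (k : ℤ) (hk : k ≠ 0) :
    ‖circInt k (Set.Ico 0 Real.pi)‖ ≤ 1 / (Real.pi * |(k:ℝ)|) := by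
  have hπ : (0:ℝ) < Real.pi := Real.pi_pos
  have hka : (0:ℝ) < |(k:ℝ)| := by
    rw [abs_pos]; exact_mod_cast hk
  have hc : (Complex.I * (k : ℂ)) ≠ 0 := by
    simp [Complex.I_ne_zero, Complex.ext_iff]
    exact_mod_cast hk
  have h1 : (∫ θ in Set.Ico (0:ℝ) Real.pi, Complex.exp (Complex.I * (k : ℂ) * (θ : ℂ)))
      = (Complex.exp (Complex.I * (k:ℂ) * Real.pi) - 1) / (Complex.I * (k:ℂ)) := by
    rw [integral_Ico_eq_integral_Ioo, ← integral_Ioc_eq_integral_Ioo,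
      ← intervalIntegral.integral_of_le Real.pi_pos.le]
    have := integral_exp_mul_complex (a := 0) (b := Real.pi) hc
    simp only [mul_assoc] at this ⊢
    rw [this]
    simp
  have h2 : ‖Complex.exp (Complex.I * (k:ℂ) * Real.pi) - 1‖ ≤ 2 := by
    refine le_trans (norm_sub_le _ _) ?_
    have : ‖Complex.exp (Complex.I * (k:ℂ) * Real.pi)‖ = 1 := by
      rw [Complex.norm_exp]
      simp [Complex.mul_re]
    rw [this]; norm_num
  have h3 : ‖Complex.I * (k:ℂ)‖ = |(k:ℝ)| := by
    rw [norm_mul, Complex.norm_I, one_mul, Complex.norm_intCast]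
  have h4 : ‖(2 * (Real.pi:ℂ))⁻¹‖ = (2 * Real.pi)⁻¹ := by
    rw [norm_inv, norm_mul, Complex.norm_real, Real.norm_eq_abs,
      abs_of_pos hπ]
    norm_num
  unfold circInt
  rw [h1, norm_mul, norm_div, h3, h4]
  calc (2 * Real.pi)⁻¹ * (‖Complex.exp (Complex.I * (k:ℂ) * Real.pi) - 1‖ / |(k:ℝ)|)
      ≤ (2 * Real.pi)⁻¹ * (2 / |(k:ℝ)|) := by gcongr
    _ = 1 / (Real.pi * |(k:ℝ)|) := by field_simp

/-- No covariant phase observable, i.e. no normalized positive operator measure of the form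
`E(X) = ∑_{n,m ∈ ℕ} ⟪ξ_n, ξ_m⟫ ∫_X z^{m-n} dμ(z) |n⟩⟨m|` with `(ξ_n)` unit vectors, is
projection valued. -/
theorem phase_observable_not_projection_valued
    {G : Type*} [NormedAddCommGroup G] [InnerProductSpace ℂ G]
    {H : Type*} [NormedAddCommGroup H] [InnerProductSpace ℂ H] [CompleteSpace H]
    (e : HilbertBasis ℕ ℂ H)
    (ξ : ℕ → G) (hξ : ∀ n, ‖ξ n‖ = 1)
    (E : Set ℝ → (H →L[ℂ] H))
    (hE : ∀ (n m : ℕ) (X : Set ℝ), MeasurableSet X → X ⊆ Set.Ico 0 (2 * Real.pi) →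
      (inner ℂ (e n) (E X (e m)) : ℂ) =
        (inner ℂ (ξ n) (ξ m) : ℂ) * circInt ((m : ℤ) - (n : ℤ)) X)
    (hnorm : E (Set.Ico 0 (2 * Real.pi)) = 1)
    (hpos : ∀ X : Set ℝ, MeasurableSet X → X ⊆ Set.Ico 0 (2 * Real.pi) →
      ∀ u : H, 0 ≤ (inner ℂ u (E X u) : ℂ)) :
    ∃ X : Set ℝ, MeasurableSet X ∧ X ⊆ Set.Ico 0 (2 * Real.pi) ∧ E X * E X ≠ E X := by
  have hπ : (0:ℝ) < Real.pi := Real.pi_pos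
  set X : Set ℝ := Set.Ico 0 Real.pi with hXdef
  have hXm : MeasurableSet X := measurableSet_Ico
  have hXs : X ⊆ Set.Ico 0 (2 * Real.pi) := by
    intro x hx
    exact ⟨hx.1, hx.2.trans_le (by nlinarith)⟩
  refine ⟨X, hXm, hXs, ?_⟩
  intro h
  set P : H →L[ℂ] H := E X with hPdef
  set a : ℕ → ℂ := fun m => (inner ℂ (e m) (P (e 0)) : ℂ) with hadef
  have ha : ∀ m, a m = (inner ℂ (ξ m) (ξ 0) : ℂ) * circInt (-(m:ℤ)) X := by
    intro m
    have := hE m 0 X hXm hXs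
    simpa using this
  have hconj : ∀ m, (inner ℂ (e 0) (P (e m)) : ℂ) = (starRingEnd ℂ) (a m) := by
    intro m
    rw [hE 0 m X hXm hXs, ha m, map_mul, circInt_conj, neg_neg, inner_conj_symm]
    norm_num
  have hPP : P (P (e 0)) = P (e 0) := by
    have := congrArg (fun T : H →L[ℂ] H => T (e 0)) h
    simpa [ContinuousLinearMap.mul_apply] using this
  have hval : (inner ℂ (e 0) (P (e 0)) : ℂ) = 1 / 2 := by
    have := hE 0 0 X hXm hXs
    rw [hPdef]
    rw [this]
    norm_num
    rw [circInt_zero]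
    have h00 : (inner ℂ (ξ 0) (ξ 0) : ℂ) = 1 := by
      rw [inner_self_eq_norm_sq_to_K, hξ 0]
      norm_num
    rw [hξ 0]; norm_num
  have hsum : HasSum (fun m => (Complex.normSq (a m) : ℂ)) (1 / 2) := by
    have h0 := (e.hasSum_repr (P (e 0))).mapL ((innerSL ℂ (e 0)).comp P)
    have hterm : ∀ m, ((innerSL ℂ (e 0)).comp P) ((e.repr (P (e 0)) m) • e m)
        = (Complex.normSq (a m) : ℂ) := by
      intro m
      simp only [ContinuousLinearMap.comp_apply, _root_.map_smul,
        HilbertBasis.repr_apply_apply, innerSL_apply_apply, inner_smul_right, smul_eq_mul,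
        hconj m, Complex.mul_conj]
      exact Complex.mul_conj (a m)
    have hv : ((innerSL ℂ (e 0)).comp P) (P (e 0)) = 1 / 2 := by
      simp only [ContinuousLinearMap.comp_apply, innerSL_apply_apply, hPP, hval]
    rw [hv] at h0
    simpa only [hterm] using h0
  have hre : HasSum (fun m => Complex.normSq (a m)) (1 / 2 : ℝ) := by
    have := hsum.mapL Complex.reCLM
    simpa using this
  have hbound : ∀ m : ℕ, Complex.normSq (a m) ≤
      (if m = 0 then (1:ℝ)/4 else 0) + Real.pi⁻¹ ^ 2 * (1 / (m:ℝ)^2) := by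
    intro m
    rcases eq_or_ne m 0 with rfl | hm
    · have : a 0 = 1 / 2 := by
        rw [ha 0]
        norm_num
        rw [circInt_zero]
        have h00 : (inner ℂ (ξ 0) (ξ 0) : ℂ) = 1 := by
          rw [inner_self_eq_norm_sq_to_K, hξ 0]
          norm_num
        rw [hξ 0]; norm_num
      rw [this, show (1/2:ℂ) = ((1/2:ℝ):ℂ) by norm_num, Complex.normSq_ofReal]
      simp only [if_pos rfl]
      norm_num
    · have hm' : (-(m:ℤ)) ≠ 0 := by simpa using hm
      have hna : ‖a m‖ ≤ 1 / (Real.pi * m) := by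
        rw [ha m, norm_mul]
        have h1 : ‖(inner ℂ (ξ m) (ξ 0) : ℂ)‖ ≤ 1 := by
          refine le_trans (norm_inner_le_norm _ _) ?_
          rw [hξ m, hξ 0]; norm_num
        have h2 : ‖circInt (-(m:ℤ)) X‖ ≤ 1 / (Real.pi * m) := by
          have := circInt_norm_le (-(m:ℤ)) hm'
          simp only [Int.cast_neg, Int.cast_natCast, abs_neg, Nat.abs_cast] at this
          exact this
        calc ‖(inner ℂ (ξ m) (ξ 0) : ℂ)‖ * ‖circInt (-(m:ℤ)) X‖
            ≤ 1 * (1 / (Real.pi * m)) := by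
              have hmpos : (0:ℝ) < m := by
                exact_mod_cast Nat.pos_of_ne_zero hm
              exact mul_le_mul h1 h2 (norm_nonneg _) (by norm_num)
          _ = 1 / (Real.pi * m) := by ring
      have hmpos : (0:ℝ) < m := by exact_mod_cast Nat.pos_of_ne_zero hm
      rw [if_neg hm, zero_add, Complex.normSq_eq_norm_sq]
      calc ‖a m‖ ^ 2 ≤ (1 / (Real.pi * m)) ^ 2 := by
            exact pow_le_pow_left₀ (norm_nonneg _) hna 2
        _ = Real.pi⁻¹ ^ 2 * (1 / (m:ℝ)^2) := by
            field_simp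
  have hg : HasSum (fun m : ℕ => (if m = 0 then (1:ℝ)/4 else 0) +
      Real.pi⁻¹ ^ 2 * (1 / (m:ℝ)^2)) (1/4 + Real.pi⁻¹ ^ 2 * (Real.pi ^ 2 / 6)) :=
    (hasSum_ite_eq 0 ((1:ℝ)/4)).add (hasSum_zeta_two.mul_left _)
  have hle := hasSum_le hbound hre hg
  have hval2 : Real.pi⁻¹ ^ 2 * (Real.pi ^ 2 / 6) = 1 / 6 := by
    field_simp
  rw [hval2] at hle
  linarith
end
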